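/- Let $F$ be a field and let $\ell$ be a prime number. Let $t \in F((s))$ be a nonzero Laurent series whose $s$-adic valuation $\operatorname{ord}_s(t) = d$ is coprime to $\ell$. If $x_0, x_1, x_2, x_3 \in F((s))$ satisfy $x_0^{\ell^2} + t\,x_1^{\ell^2} + t^2 x_2^{\ell^2} + t^3 x_3^{\ell^2} = 0$, then $x_0 = x_1 = x_2 = x_3 = 0$. (Consequently, the projective hypersurface $\{x_0^{\ell^2} + t x_1^{\ell^2} + t^2 x_2^{\ell^2} + t^3 x_3^{\ell^2} = 0\} \subset \mathbb{P}^3$ over $F((t))$ has no rational point over any Laurent series extension $F((s))$ in which $t$ has valuation coprime to $\ell$.) -/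
import Mathlib



lemma arith_key (ℓ : ℕ) (hℓ : ℓ.Prime) (d : ℤ) (hcop : IsCoprime d (ℓ : ℤ))
    (i j oi oj : ℤ) (hij : i ≠ j) (hlt : |i - j| < 4)
    (h : i * d + ℓ ^ 2 * oi = j * d + ℓ ^ 2 * oj) : False := by
  have hdvd : ((ℓ : ℤ) ^ 2) ∣ (i - j) * d := ⟨oj - oi, by linarith [h]⟩
  have hco2 : IsCoprime ((ℓ : ℤ) ^ 2) d := (hcop.symm).pow_left
  have hdvd2 : ((ℓ : ℤ) ^ 2) ∣ (i - j) := hco2.dvd_of_dvd_mul_right hdvd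
  have hne : i - j ≠ 0 := sub_ne_zero.mpr hij
  have hle : (ℓ : ℤ) ^ 2 ≤ |i - j| :=
    Int.le_of_dvd (abs_pos.mpr hne) ((dvd_abs _ _).mpr hdvd2)
  have h2 : (2 : ℤ) ≤ (ℓ : ℤ) := by exact_mod_cast hℓ.two_le
  nlinarith

lemma val_term_ne {F : Type*} [Field F] (ℓ : ℕ) (hℓ : ℓ.Prime)
    (t : LaurentSeries F) (ht : t ≠ 0) (d : ℤ) (hd : t.order = d)
    (hcop : IsCoprime d (ℓ : ℤ)) (i j : ℕ) (xi xj : LaurentSeries F)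
    (hij : (i : ℤ) ≠ (j : ℤ)) (hlt : |(i : ℤ) - (j : ℤ)| < 4)
    (hxi : xi ≠ 0) (hxj : xj ≠ 0) :
    HahnSeries.addVal ℤ F (t ^ i * xi ^ ℓ ^ 2) ≠ HahnSeries.addVal ℤ F (t ^ j * xj ^ ℓ ^ 2) := by
  intro hv
  have hi0 : t ^ i * xi ^ ℓ ^ 2 ≠ 0 := mul_ne_zero (pow_ne_zero _ ht) (pow_ne_zero _ hxi)
  have hj0 : t ^ j * xj ^ ℓ ^ 2 ≠ 0 := mul_ne_zero (pow_ne_zero _ ht) (pow_ne_zero _ hxj)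
  rw [HahnSeries.addVal_apply_of_ne hi0, HahnSeries.addVal_apply_of_ne hj0,
    WithTop.coe_inj] at hv
  rw [HahnSeries.order_mul (pow_ne_zero _ ht) (pow_ne_zero _ hxi),
    HahnSeries.order_mul (pow_ne_zero _ ht) (pow_ne_zero _ hxj),
    HahnSeries.order_pow, HahnSeries.order_pow, HahnSeries.order_pow,
    HahnSeries.order_pow, hd] at hv
  simp only [nsmul_eq_mul] at hv
  refine arith_key ℓ hℓ d hcop i j xi.order xj.order hij hlt ?_
  push_cast at hv ⊢
  linarith [hv]
lemma vne_of {K : Type*} [Field K] (v : AddValuation K (WithTop ℤ)) {x y : K}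
    (hxy : x ≠ 0 → y ≠ 0 → v x ≠ v y) (hx : x ≠ 0) : v x ≠ v y := by
  by_cases hy : y = 0
  · rw [hy, v.map_zero]; exact (v.ne_top_iff).mpr hx
  · exact hxy hx hy

lemma min_case' {K : Type*} [Field K] (v : AddValuation K (WithTop ℤ)) {a b c d : K}
    (h : a + b + c + d = 0) (h1 : v a < v b) (h2 : v a < v c) (h3 : v a < v d) : False := by
  have hbcd : v a < v (b + c + d) := v.map_lt_add (v.map_lt_add h1 h2) h3
  have hsum : v (a + (b + c + d)) = v a := v.map_add_eq_of_lt_left hbcd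
  have hz : a + (b + c + d) = 0 := by linear_combination h
  rw [hz, v.map_zero] at hsum
  rw [← hsum] at h1
  exact not_top_lt h1

lemma four_zero {K : Type*} [Field K] (v : AddValuation K (WithTop ℤ)) {a b c d : K}
    (h : a + b + c + d = 0)
    (hab : a ≠ 0 → b ≠ 0 → v a ≠ v b)
    (hac : a ≠ 0 → c ≠ 0 → v a ≠ v c)
    (had : a ≠ 0 → d ≠ 0 → v a ≠ v d)
    (hbc : b ≠ 0 → c ≠ 0 → v b ≠ v c)
    (hbd : b ≠ 0 → d ≠ 0 → v b ≠ v d)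
    (hcd : c ≠ 0 → d ≠ 0 → v c ≠ v d) :
    a = 0 ∧ b = 0 ∧ c = 0 ∧ d = 0 := by
  have Hab : a ≠ 0 → v a ≠ v b := vne_of v hab
  have Hac : a ≠ 0 → v a ≠ v c := vne_of v hac
  have Had : a ≠ 0 → v a ≠ v d := vne_of v had
  have Hba : b ≠ 0 → v b ≠ v a := vne_of v fun h1 h2 => (hab h2 h1).symm
  have Hbc : b ≠ 0 → v b ≠ v c := vne_of v hbc
  have Hbd : b ≠ 0 → v b ≠ v d := vne_of v hbd
  have Hca : c ≠ 0 → v c ≠ v a := vne_of v fun h1 h2 => (hac h2 h1).symm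
  have Hcb : c ≠ 0 → v c ≠ v b := vne_of v fun h1 h2 => (hbc h2 h1).symm
  have Hcd : c ≠ 0 → v c ≠ v d := vne_of v hcd
  have Hda : d ≠ 0 → v d ≠ v a := vne_of v fun h1 h2 => (had h2 h1).symm
  have Hdb : d ≠ 0 → v d ≠ v b := vne_of v fun h1 h2 => (hbd h2 h1).symm
  have Hdc : d ≠ 0 → v d ≠ v c := vne_of v fun h1 h2 => (hcd h2 h1).symm
  by_contra hcon
  have hex : a ≠ 0 ∨ b ≠ 0 ∨ c ≠ 0 ∨ d ≠ 0 := by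
    by_contra hne
    push_neg at hne
    exact hcon ⟨hne.1, hne.2.1, hne.2.2.1, hne.2.2.2⟩
  set m := min (min (v a) (v b)) (min (v c) (v d)) with hm
  have hma : m ≤ v a := le_trans (min_le_left _ _) (min_le_left _ _)
  have hmb : m ≤ v b := le_trans (min_le_left _ _) (min_le_right _ _)
  have hmc : m ≤ v c := le_trans (min_le_right _ _) (min_le_left _ _)
  have hmd : m ≤ v d := le_trans (min_le_right _ _) (min_le_right _ _)
  have hmtop : m ≠ ⊤ := by
    rcases hex with hx | hx | hx | hx
    · exact fun hmt => (v.ne_top_iff.mpr hx) (top_le_iff.mp (hmt ▸ hma))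
    · exact fun hmt => (v.ne_top_iff.mpr hx) (top_le_iff.mp (hmt ▸ hmb))
    · exact fun hmt => (v.ne_top_iff.mpr hx) (top_le_iff.mp (hmt ▸ hmc))
    · exact fun hmt => (v.ne_top_iff.mpr hx) (top_le_iff.mp (hmt ▸ hmd))
  have hcases : m = v a ∨ m = v b ∨ m = v c ∨ m = v d := by
    rcases min_cases (min (v a) (v b)) (min (v c) (v d)) with ⟨h', _⟩ | ⟨h', _⟩ <;>
      rw [hm, h'] <;>
      [rcases min_cases (v a) (v b) with ⟨h'', _⟩ | ⟨h'', _⟩;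
       rcases min_cases (v c) (v d) with ⟨h'', _⟩ | ⟨h'', _⟩] <;> simp [h'']
  rcases hcases with hmv | hmv | hmv | hmv
  · have hne : a ≠ 0 := v.ne_top_iff.mp (hmv ▸ hmtop)
    rw [hmv] at hmb hmc hmd
    exact min_case' v h (lt_of_le_of_ne hmb (Hab hne))
      (lt_of_le_of_ne hmc (Hac hne)) (lt_of_le_of_ne hmd (Had hne))
  · have hne : b ≠ 0 := v.ne_top_iff.mp (hmv ▸ hmtop)
    rw [hmv] at hma hmc hmd
    exact min_case' v (show b + a + c + d = 0 by linear_combination h)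
      (lt_of_le_of_ne hma (Hba hne))
      (lt_of_le_of_ne hmc (Hbc hne)) (lt_of_le_of_ne hmd (Hbd hne))
  · have hne : c ≠ 0 := v.ne_top_iff.mp (hmv ▸ hmtop)
    rw [hmv] at hma hmb hmd
    exact min_case' v (show c + a + b + d = 0 by linear_combination h)
      (lt_of_le_of_ne hma (Hca hne))
      (lt_of_le_of_ne hmb (Hcb hne)) (lt_of_le_of_ne hmd (Hcd hne))
  · have hne : d ≠ 0 := v.ne_top_iff.mp (hmv ▸ hmtop)
    rw [hmv] at hma hmb hmc
    exact min_case' v (show d + a + b + c = 0 by linear_combination h)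
      (lt_of_le_of_ne hma (Hda hne))
      (lt_of_le_of_ne hmb (Hdb hne)) (lt_of_le_of_ne hmc (Hdc hne))


/-- Let `F` be a field and `ℓ` a prime. Let `t ∈ F((s))` be a nonzero Laurent series whose
`s`-adic valuation `ordₛ(t) = d` is coprime to `ℓ`. If `x₀, x₁, x₂, x₃ ∈ F((s))` satisfy
`x₀^{ℓ²} + t x₁^{ℓ²} + t² x₂^{ℓ²} + t³ x₃^{ℓ²} = 0`, then `x₀ = x₁ = x₂ = x₃ = 0`. -/
theorem no_rational_point_of_coprime_valuation
    (F : Type*) [Field F] (ℓ : ℕ) (hℓ : ℓ.Prime)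
    (t : LaurentSeries F) (ht : t ≠ 0) (d : ℤ) (hd : t.order = d)
    (hcop : IsCoprime d (ℓ : ℤ))
    (x0 x1 x2 x3 : LaurentSeries F)
    (heq : x0 ^ ℓ ^ 2 + t * x1 ^ ℓ ^ 2 + t ^ 2 * x2 ^ ℓ ^ 2 + t ^ 3 * x3 ^ ℓ ^ 2 = 0) :
    x0 = 0 ∧ x1 = 0 ∧ x2 = 0 ∧ x3 = 0 := by
  have he : ℓ ^ 2 ≠ 0 := pow_ne_zero 2 hℓ.ne_zero
  set v := HahnSeries.addVal ℤ F with hv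
  have heq' : t ^ 0 * x0 ^ ℓ ^ 2 + t ^ 1 * x1 ^ ℓ ^ 2 + t ^ 2 * x2 ^ ℓ ^ 2
      + t ^ 3 * x3 ^ ℓ ^ 2 = 0 := by
    rw [pow_zero, one_mul, pow_one]; exact heq
  have key : ∀ (i j : ℕ) (xi xj : LaurentSeries F), (i : ℤ) ≠ (j : ℤ) →
      |(i : ℤ) - (j : ℤ)| < 4 →
      t ^ i * xi ^ ℓ ^ 2 ≠ 0 → t ^ j * xj ^ ℓ ^ 2 ≠ 0 →
      v (t ^ i * xi ^ ℓ ^ 2) ≠ v (t ^ j * xj ^ ℓ ^ 2) := by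
    intro i j xi xj hij hlt hi0 hj0
    have hxi : xi ≠ 0 := fun h => hi0 (by rw [h, zero_pow he, mul_zero])
    have hxj : xj ≠ 0 := fun h => hj0 (by rw [h, zero_pow he, mul_zero])
    exact val_term_ne ℓ hℓ t ht d hd hcop i j xi xj hij hlt hxi hxj
  have h4 := four_zero v heq'
    (key 0 1 x0 x1 (by norm_num) (by norm_num))
    (key 0 2 x0 x2 (by norm_num) (by norm_num))
    (key 0 3 x0 x3 (by norm_num) (by norm_num))
    (key 1 2 x1 x2 (by norm_num) (by norm_num))
    (key 1 3 x1 x3 (by norm_num) (by norm_num))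
    (key 2 3 x2 x3 (by norm_num) (by norm_num))
  obtain ⟨h0, h1, h2, h3⟩ := h4
  refine ⟨?_, ?_, ?_, ?_⟩
  · have := (mul_eq_zero.mp h0).resolve_left (pow_ne_zero 0 ht)
    exact pow_eq_zero_iff he |>.mp this
  · have := (mul_eq_zero.mp h1).resolve_left (pow_ne_zero 1 ht)
    exact pow_eq_zero_iff he |>.mp this
  · have := (mul_eq_zero.mp h2).resolve_left (pow_ne_zero 2 ht)
    exact pow_eq_zero_iff he |>.mp this
  · have := (mul_eq_zero.mp h3).resolve_left (pow_ne_zero 3 ht)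
    exact pow_eq_zero_iff he |>.mp this
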